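/- Let p be an odd prime, e ≥ 1, n = p^e, 1 ≤ f ≤ e. In G_f, if x and y generate G_f then G_f = ⟨x⟩⟨y⟩ (every element is a product of a power of x and a power of y) and ⟨x⟩ ∩ ⟨y⟩ = 1. -/

import Mathlib

/-- The relations for the group `G_f = ⟨g, h | g^n = h^n = 1, g⁻¹hg = h^q⟩`. -/
def fermatRels (n q : ℕ) : Set (FreeGroup (Fin 2)) :=
  {FreeGroup.of 0 ^ n, FreeGroup.of 1 ^ n,
   (FreeGroup.of 0)⁻¹ * FreeGroup.of 1 * FreeGroup.of 0 * (FreeGroup.of 1 ^ q)⁻¹}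

/-- The group `G_f` (with `n = p^e`, `q = 1 + p^f`). -/
abbrev Gf (n q : ℕ) := PresentedGroup (fermatRels n q)

/-- The generator `g` of `G_f`. -/
def gGen (n q : ℕ) : Gf n q := PresentedGroup.of 0

/-- The generator `h` of `G_f`. -/
def hGen (n q : ℕ) : Gf n q := PresentedGroup.of 1


open Finset

/-- `u^2 ∣ (1+u)^r - 1 - r*u`. -/
lemma lemA (u : ℤ) (r : ℕ) : u^2 ∣ (1+u)^r - 1 - r*u := by
  induction r with
  | zero => simp
  | succ r ih =>
    have : (1+u)^(r+1) - 1 - (r+1 : ℕ)*u = ((1+u)^r - 1 - r*u)*(1+u) + r*u^2 := by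
      push_cast; ring
    rw [this]
    exact dvd_add (Dvd.dvd.mul_right ih _) (Dvd.dvd.mul_left (dvd_refl _) _)

/-- For odd prime `p`, `p ∣ ∑ i < p, i` (as integers). -/
lemma lemB (p : ℕ) (hp : p.Prime) (hodd : Odd p) : (p:ℤ) ∣ ∑ i ∈ range p, (i:ℤ) := by
  have h2 : (∑ i ∈ range p, i) * 2 = p * (p-1) := Finset.sum_range_id_mul_two p
  have hd : p ∣ (∑ i ∈ range p, i) * 2 := h2 ▸ Dvd.intro _ rfl
  have hcop : Nat.Coprime p 2 := by
    have : p ≠ 2 := by rintro rfl; simp [Nat.odd_iff] at hodd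
    exact (Nat.coprime_primes hp Nat.prime_two).mpr this
  have h3 : p ∣ ∑ i ∈ range p, i := hcop.dvd_of_dvd_mul_right hd
  have := Int.natCast_dvd_natCast.mpr h3
  simpa using this

/-- geometric sum ≡ p mod p^(f+1), for p odd, p^f ∣ u, f ≥ 1. -/
lemma lemC (p f : ℕ) (hp : p.Prime) (hodd : Odd p) (hf : 1 ≤ f) (u : ℤ)
    (hu : (p:ℤ)^f ∣ u) : (p:ℤ)^(f+1) ∣ (∑ i ∈ range p, (1+u)^i) - p := by
  have key : (∑ i ∈ range p, (1+u)^i) - p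
      = (∑ i ∈ range p, ((1+u)^i - 1 - i*u)) + u * ∑ i ∈ range p, (i:ℤ) := by
    rw [Finset.sum_sub_distrib, Finset.sum_sub_distrib, Finset.mul_sum]
    simp only [Finset.sum_const, Finset.card_range, nsmul_eq_mul, mul_one]
    simp [mul_comm]
  rw [key]
  apply dvd_add
  · apply Finset.dvd_sum
    intro i _
    have h1 : u^2 ∣ (1+u)^i - 1 - i*u := lemA u i
    have h2 : (p:ℤ)^(f+1) ∣ u^2 := by
      calc (p:ℤ)^(f+1) ∣ (p:ℤ)^(f+f) := pow_dvd_pow _ (by omega)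
        _ = (p:ℤ)^f * (p:ℤ)^f := by rw [pow_add]
        _ ∣ u * u := mul_dvd_mul hu hu
        _ = u^2 := (sq u).symm
    exact h2.trans h1
  · rw [pow_succ]
    exact mul_dvd_mul hu (lemB p hp hodd)

/-- splitting of geometric sums -/
lemma lemD (t : ℤ) (p k : ℕ) :
    ∑ i ∈ range (p*k), t^i = (∑ i ∈ range k, (t^p)^i) * (∑ i ∈ range p, t^i) := by
  induction k with
  | zero => simp
  | succ k ih =>
    rw [Nat.mul_succ, Finset.sum_range_add, ih, Finset.sum_range_succ, add_mul]
    congr 1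
    rw [Finset.mul_sum]
    apply Finset.sum_congr rfl
    intro i _
    rw [pow_add, pow_mul, mul_comm]

/-- Main lemma: if p^f ∣ u and p^j ∣ k then p^(f+j) ∣ (∑ i<k, (1+u)^i) - k. -/
lemma nt_main (p : ℕ) (hp : p.Prime) (hodd : Odd p) :
    ∀ (j f : ℕ), 1 ≤ f → ∀ u : ℤ, (p:ℤ)^f ∣ u → ∀ k : ℕ, p^j ∣ k →
    (p:ℤ)^(f+j) ∣ (∑ i ∈ range k, (1+u)^i) - k := by
  intro j
  induction j with
  | zero =>
    intro f hf u hu k _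
    have : (∑ i ∈ range k, (1+u)^i) - k = ∑ i ∈ range k, ((1+u)^i - 1) := by
      rw [Finset.sum_sub_distrib]; simp
    rw [this, Nat.add_zero]
    apply Finset.dvd_sum
    intro i _
    have h1 : (1+u) - 1 ∣ (1+u)^i - 1^i := sub_dvd_pow_sub_pow _ _ i
    simp only [add_sub_cancel_left, one_pow] at h1
    exact hu.trans h1
  | succ j ih =>
    intro f hf u hu k hk
    obtain ⟨k', rfl⟩ : ∃ k', k = p * k' := by
      obtain ⟨m, hm⟩ := hk
      exact ⟨p^j * m, by rw [hm]; ring⟩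
    have hk' : p^j ∣ k' := by
      have h := hk
      obtain ⟨m, hm⟩ := h
      refine ⟨m, Nat.eq_of_mul_eq_mul_left hp.pos ?_⟩
      rw [hm]; ring
    set t : ℤ := 1 + u with ht
    obtain ⟨r, hr⟩ : (p:ℤ)^(f+1) ∣ (∑ i ∈ range p, t^i) - p := lemC p f hp hodd hf u hu
    -- p ∣ B where B = geometric sum of length p
    have hpB : (p:ℤ) ∣ ∑ i ∈ range p, t^i := by
      have hEq : (∑ i ∈ range p, t^i) = p + (p:ℤ)^(f+1) * r := by linarith [hr]
      rw [hEq]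
      exact dvd_add (dvd_refl _) ((dvd_pow_self (p:ℤ) (by omega : f + 1 ≠ 0)).mul_right r)
    -- u' = t^p - 1 is divisible by p^(f+1)
    have hu' : (p:ℤ)^(f+1) ∣ t^p - 1 := by
      have hgm : (∑ i ∈ range p, t^i) * (t - 1) = t^p - 1 := geom_sum_mul t p
      have ht1 : t - 1 = u := by rw [ht]; ring
      rw [← hgm, ht1, pow_succ, mul_comm ((p:ℤ)^f) (p:ℤ)]
      exact mul_dvd_mul hpB hu
    -- write t^p = 1 + u'
    have htp : t^p = 1 + (t^p - 1) := by ring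
    obtain ⟨r₁, hr₁⟩ : (p:ℤ)^((f+1)+j) ∣ (∑ i ∈ range k', (t^p)^i) - k' := by
      have := ih (f+1) (by omega) (t^p - 1) hu' k' hk'
      rwa [← htp] at this
    -- assemble
    rw [lemD t p k']
    have hBval : (∑ i ∈ range p, t^i) = p + (p:ℤ)^(f+1) * r := by linarith [hr]
    have hAval : (∑ i ∈ range k', (t^p)^i) = k' + (p:ℤ)^((f+1)+j) * r₁ := by linarith [hr₁]
    rw [hBval, hAval]
    obtain ⟨m, hm⟩ := hk'
    have : ((k':ℤ) + (p:ℤ)^((f+1)+j) * r₁) * ((p:ℤ) + (p:ℤ)^(f+1) * r) - (p*k' : ℕ)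
        = (p:ℤ)^(f+(j+1)) * ((m:ℤ) * r + r₁ * p + r₁ * r * (p:ℤ)^(f+1)) := by
      push_cast [hm]
      ring
    rw [this]
    exact Dvd.intro _ rfl
open Finset

section ModelDef

/-- model group: pairs (i,b) with (i,b)*(j,c) = (i+j, b*U^j + c). -/
@[ext]
structure Mdl (n : ℕ) (U : (ZMod n)ˣ) (hU : U ^ n = 1) where
  i : ZMod n
  b : ZMod n

variable {n : ℕ} {U : (ZMod n)ˣ} {hU : U ^ n = 1}

/-- `U ^ j` for `j : ZMod n`. -/
def Qc (U : (ZMod n)ˣ) (j : ZMod n) : ZMod n := ((U ^ j.val : (ZMod n)ˣ) : ZMod n)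

lemma Qc_add [NeZero n] (hU : U ^ n = 1) (i j : ZMod n) :
    Qc U (i + j) = Qc U i * Qc U j := by
  unfold Qc
  rw [← Units.val_mul, ← pow_add]
  congr 1
  rw [pow_eq_pow_iff_modEq]
  exact Nat.ModEq.of_dvd (orderOf_dvd_of_pow_eq_one hU)
    (by rw [ZMod.val_add]; exact Nat.mod_modEq _ n)

lemma Qc_zero : Qc U (0 : ZMod n) = 1 := by
  unfold Qc; rw [ZMod.val_zero, pow_zero, Units.val_one]

instance : Mul (Mdl n U hU) := ⟨fun x y => ⟨x.i + y.i, x.b * Qc U y.i + y.b⟩⟩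
instance : One (Mdl n U hU) := ⟨⟨0, 0⟩⟩
instance : Inv (Mdl n U hU) := ⟨fun x => ⟨-x.i, -x.b * Qc U (-x.i)⟩⟩

lemma Mdl.mul_def (x y : Mdl n U hU) : x * y = ⟨x.i + y.i, x.b * Qc U y.i + y.b⟩ := rfl
lemma Mdl.one_def : (1 : Mdl n U hU) = ⟨0, 0⟩ := rfl

instance [NeZero n] : Group (Mdl n U hU) :=
  Group.ofLeftAxioms
    (fun a b c => by
      simp only [Mdl.mul_def]
      ext
      · exact add_assoc _ _ _
      · simp only [Qc_add hU]; ring)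
    (fun a => by simp [Mdl.mul_def, Mdl.one_def, Qc_zero])
    (fun a => by
      simp only [Mdl.mul_def, Mdl.one_def, Inv.inv]
      ext
      · simp
      · have h1 : Qc U (-a.i) * Qc U a.i = 1 := by
          rw [← Qc_add hU, neg_add_cancel, Qc_zero]
        show -a.b * Qc U (-a.i) * Qc U a.i + a.b = 0
        linear_combination (-a.b) * h1)

variable [NeZero n]

lemma Mdl.pow_mk (a b : ZMod n) (k : ℕ) :
    (⟨a, b⟩ : Mdl n U hU) ^ k = ⟨(k : ZMod n) * a, b * ∑ i ∈ range k, (Qc U a) ^ i⟩ := by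
  induction k with
  | zero => simp [Mdl.one_def]
  | succ k ih =>
    rw [pow_succ, ih, Mdl.mul_def]
    ext
    · push_cast; ring
    · simp only [geom_sum_succ]
      ring

/-- equivalence with the product, for counting -/
def Mdl.equivProd : (ZMod n × ZMod n) ≃ Mdl n U hU where
  toFun z := ⟨z.1, z.2⟩
  invFun x := (x.i, x.b)
  left_inv z := rfl
  right_inv x := rfl

instance : Fintype (Mdl n U hU) := Fintype.ofEquiv _ (Mdl.equivProd (hU := hU))

lemma Mdl.card : Fintype.card (Mdl n U hU) = n * n := by
  rw [← Fintype.card_congr (Mdl.equivProd (hU := hU))]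
  simp [ZMod.card]

end ModelDef

section Main

variable (p e f : ℕ)

/-- `p^(f+j) ∣ (1+p^f)^s - 1` when `p^j ∣ s`. -/
lemma cor_dvd (hp : p.Prime) (hodd : Odd p) (hf1 : 1 ≤ f) (j s : ℕ) (hs : p^j ∣ s) :
    (p:ℤ)^(f+j) ∣ (1+(p:ℤ)^f)^s - 1 := by
  have hgm : (∑ i ∈ range s, (1+(p:ℤ)^f)^i) * ((1+(p:ℤ)^f) - 1) = (1+(p:ℤ)^f)^s - 1 :=
    geom_sum_mul _ s
  have h1 : (1+(p:ℤ)^f) - 1 = (p:ℤ)^f := by ring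
  rw [← hgm, h1]
  have h2 : (p:ℤ)^j ∣ ∑ i ∈ range s, (1+(p:ℤ)^f)^i := by
    obtain ⟨w, hw⟩ := nt_main p hp hodd j f hf1 ((p:ℤ)^f) dvd_rfl s hs
    have hsd : (p:ℤ)^j ∣ (s:ℤ) := by
      exact_mod_cast Int.natCast_dvd_natCast.mpr hs
    have : (∑ i ∈ range s, (1+(p:ℤ)^f)^i) = (s:ℤ) + (p:ℤ)^(f+j) * w := by linarith
    rw [this]
    exact dvd_add hsd (Dvd.dvd.mul_right (pow_dvd_pow _ (by omega)) w)
  rw [pow_add, mul_comm ((p:ℤ)^f) ((p:ℤ)^j)]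
  exact mul_dvd_mul h2 dvd_rfl

variable [NeZero (p^e)]
variable {U : (ZMod (p^e))ˣ} {hU : U ^ (p^e) = 1}

/-- geometric sums in `ZMod (p^e)` are close to their length. -/
lemma geom_approx (hp : p.Prime) (hodd : Odd p) (hf1 : 1 ≤ f)
    (hUq : (U : ZMod (p^e)) = ((1 + p^f : ℕ) : ZMod (p^e)))
    (a : ZMod (p^e)) (k M : ℕ) (hk : p^M ∣ k) :
    ∃ w : ZMod (p^e),
      (∑ i ∈ range k, (Qc U a) ^ i) = (k : ZMod (p^e)) + (p : ZMod (p^e))^(f+M) * w := by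
  set s := a.val with hs
  have hQ : Qc U a = (((1+p^f)^s : ℕ) : ZMod (p^e)) := by
    unfold Qc
    rw [Units.val_pow_eq_pow_val, hUq]
    push_cast
    ring
  set u : ℤ := ((1:ℤ)+(p:ℤ)^f)^s - 1 with hu
  have hud : (p:ℤ)^f ∣ u := by
    have := cor_dvd p f hp hodd hf1 0 s (by simp)
    simpa using this
  obtain ⟨w₀, hw₀⟩ := nt_main p hp hodd M f hf1 u hud k hk
  have h1u : (1:ℤ) + u = ((1:ℤ)+(p:ℤ)^f)^s := by rw [hu]; ring
  refine ⟨((w₀ : ℤ) : ZMod (p^e)), ?_⟩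
  have hsum : (∑ i ∈ range k, (1+u)^i) = (k:ℤ) + (p:ℤ)^(f+M) * w₀ := by linarith
  have hcast := congrArg (fun z : ℤ => (z : ZMod (p^e))) hsum
  simp only [h1u] at hcast
  push_cast at hcast
  rw [hQ]
  push_cast
  push_cast at hcast
  convert hcast using 2

/-- every element of the model has order dividing `p^e`. -/
lemma Mdl_pow_card (hp : p.Prime) (hodd : Odd p) (hf1 : 1 ≤ f)
    (hUq : (U : ZMod (p^e)) = ((1 + p^f : ℕ) : ZMod (p^e)))
    (x : Mdl (p^e) U hU) : x ^ (p^e) = 1 := by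
  obtain ⟨a, b⟩ := x
  rw [Mdl.pow_mk]
  obtain ⟨w, hw⟩ := geom_approx p e f hp hodd hf1 hUq a (p^e) e dvd_rfl
  rw [hw, Mdl.one_def]
  have h1 : ((p^e : ℕ) : ZMod (p^e)) = 0 := ZMod.natCast_self _
  have h2 : ((p : ZMod (p^e)))^(f+e) = 0 := by
    have h3 : ((p^(f+e) : ℕ) : ZMod (p^e)) = 0 :=
      (ZMod.natCast_eq_zero_iff _ _).mpr (pow_dvd_pow p (by omega))
    push_cast at h3
    exact h3
  ext
  · show ((p^e : ℕ) : ZMod (p^e)) * a = 0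
    rw [h1, zero_mul]
  · show b * (((p^e : ℕ) : ZMod (p^e)) + (p : ZMod (p^e))^(f+e) * w) = 0
    rw [h1, h2]
    ring

end Main

section Main2

variable (p e f : ℕ) [NeZero (p^e)]
variable {U : (ZMod (p^e))ˣ} {hU : U ^ (p^e) = 1}

/-- the key lemma: powers of two "independent" elements agree only trivially -/
lemma core_nat (hp : p.Prime) (hodd : Odd p) (hf1 : 1 ≤ f)
    (hUq : (U : ZMod (p^e)) = ((1 + p^f : ℕ) : ZMod (p^e)))
    (a b c d : ZMod (p^e)) (hdet : IsUnit (a*d - b*c)) (k l : ℕ)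
    (hxy : (⟨a,b⟩ : Mdl (p^e) U hU)^k = (⟨c,d⟩ : Mdl (p^e) U hU)^l) :
    p^e ∣ k ∧ p^e ∣ l := by
  rw [Mdl.pow_mk, Mdl.pow_mk, Mdl.mk.injEq] at hxy
  obtain ⟨E1, E2⟩ := hxy
  suffices H : ∀ M, M ≤ e → p^M ∣ k ∧ p^M ∣ l from H e le_rfl
  intro M
  induction M with
  | zero => intro _; simp
  | succ M ihM =>
    intro hMe
    obtain ⟨hk, hl⟩ := ihM (by omega)
    obtain ⟨w₁, hw₁⟩ := geom_approx p e f hp hodd hf1 hUq a k M hk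
    obtain ⟨w₂, hw₂⟩ := geom_approx p e f hp hodd hf1 hUq c l M hl
    have hdvd : (p^(M+1) : ℕ) ∣ p^e := pow_dvd_pow p hMe
    haveI : NeZero (p^(M+1)) := ⟨pow_ne_zero _ hp.pos.ne'⟩
    set φ : ZMod (p^e) →+* ZMod (p^(M+1)) := ZMod.castHom hdvd _ with hφ
    have hkill : φ ((p : ZMod (p^e))^(f+M)) = 0 := by
      rw [map_pow, map_natCast]
      have h3 : ((p^(f+M) : ℕ) : ZMod (p^(M+1))) = 0 :=
        (ZMod.natCast_eq_zero_iff _ _).mpr (pow_dvd_pow p (by omega))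
      push_cast at h3
      exact h3
    rw [hw₁, hw₂] at E2
    have E2' : φ b * (k : ZMod (p^(M+1))) = φ d * (l : ZMod (p^(M+1))) := by
      have h := congrArg φ E2
      rw [map_mul, map_mul, map_add, map_add, map_mul, map_mul, hkill, zero_mul, add_zero,
        zero_mul, add_zero, map_natCast, map_natCast] at h
      exact h
    have E1' : (k : ZMod (p^(M+1))) * φ a = (l : ZMod (p^(M+1))) * φ c := by
      have h := congrArg φ E1
      rw [map_mul, map_mul, map_natCast, map_natCast] at h
      exact h
    have hdet' : IsUnit (φ (a*d - b*c)) := hdet.map φ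
    have hsub : φ (a*d - b*c) = φ a * φ d - φ b * φ c := by
      rw [map_sub, map_mul, map_mul]
    constructor
    · have hz : (k : ZMod (p^(M+1))) * φ (a*d - b*c) = 0 := by
        rw [hsub]
        have expand : (k : ZMod (p^(M+1))) * (φ a * φ d - φ b * φ c)
            = φ d * ((k : ZMod (p^(M+1))) * φ a) - φ c * (φ b * (k : ZMod (p^(M+1)))) := by ring
        rw [expand, E1', E2']
        ring
      have hk0 : (k : ZMod (p^(M+1))) = 0 := by
        rwa [hdet'.mul_left_eq_zero] at hz
      exact (ZMod.natCast_eq_zero_iff _ _).mp hk0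
    · have hz : (l : ZMod (p^(M+1))) * φ (a*d - b*c) = 0 := by
        rw [hsub]
        have expand : (l : ZMod (p^(M+1))) * (φ a * φ d - φ b * φ c)
            = φ a * (φ d * (l : ZMod (p^(M+1)))) - φ b * ((l : ZMod (p^(M+1))) * φ c) := by ring
        rw [expand, ← E2', ← E1']
        ring
      have hl0 : (l : ZMod (p^(M+1))) = 0 := by
        rwa [hdet'.mul_left_eq_zero] at hz
      exact (ZMod.natCast_eq_zero_iff _ _).mp hl0

/-- reduce integer powers using the exponent -/
lemma zpow_reduce {G : Type*} [Group G] (z : G) (N : ℕ) (hN : 0 < N) (hz : z ^ N = 1)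
    (α : ℤ) : z ^ α = z ^ ((α % N).toNat) := by
  have hNne : (N:ℤ) ≠ 0 := by exact_mod_cast hN.ne'
  have h0 : 0 ≤ α % N := Int.emod_nonneg α hNne
  conv_lhs => rw [← Int.mul_ediv_add_emod α N]
  rw [zpow_add, zpow_mul, zpow_natCast, hz, one_zpow, one_mul,
    ← zpow_natCast, Int.toNat_of_nonneg h0]

/-- integer version of the core lemma -/
lemma core_int (hp : p.Prime) (hodd : Odd p) (hf1 : 1 ≤ f)
    (hUq : (U : ZMod (p^e)) = ((1 + p^f : ℕ) : ZMod (p^e)))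
    (a b c d : ZMod (p^e)) (hdet : IsUnit (a*d - b*c)) (α β : ℤ)
    (hxy : (⟨a,b⟩ : Mdl (p^e) U hU)^α = (⟨c,d⟩ : Mdl (p^e) U hU)^β) :
    ((p^e : ℕ) : ℤ) ∣ α ∧ ((p^e : ℕ) : ℤ) ∣ β := by
  have hNpos : 0 < p^e := pow_pos hp.pos e
  rw [zpow_reduce _ _ hNpos (Mdl_pow_card p e f hp hodd hf1 hUq _) α,
      zpow_reduce _ _ hNpos (Mdl_pow_card p e f hp hodd hf1 hUq _) β] at hxy
  obtain ⟨hk, hl⟩ := core_nat p e f hp hodd hf1 hUq a b c d hdet _ _ hxy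
  have hNne : ((p^e : ℕ):ℤ) ≠ 0 := by exact_mod_cast hNpos.ne'
  constructor
  · apply Int.dvd_of_emod_eq_zero
    have h1 : ((p^e:ℕ) : ℤ) ∣ ((α % (p^e:ℕ)).toNat : ℤ) := by exact_mod_cast hk
    rw [Int.toNat_of_nonneg (Int.emod_nonneg α hNne)] at h1
    exact Int.eq_zero_of_dvd_of_nonneg_of_lt (Int.emod_nonneg α hNne)
      (Int.emod_lt_of_pos α (by exact_mod_cast hNpos : (0:ℤ) < (p^e:ℕ))) h1
  · apply Int.dvd_of_emod_eq_zero
    have h1 : ((p^e:ℕ) : ℤ) ∣ ((β % (p^e:ℕ)).toNat : ℤ) := by exact_mod_cast hl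
    rw [Int.toNat_of_nonneg (Int.emod_nonneg β hNne)] at h1
    exact Int.eq_zero_of_dvd_of_nonneg_of_lt (Int.emod_nonneg β hNne)
      (Int.emod_lt_of_pos β (by exact_mod_cast hNpos : (0:ℤ) < (p^e:ℕ))) h1

end Main2

section Main3

variable (p e f : ℕ) [NeZero (p^e)]
variable {U : (ZMod (p^e))ˣ} {hU : U ^ (p^e) = 1}

/-- every element is a product of powers of two independent elements -/
lemma prod_decomp (hp : p.Prime) (hodd : Odd p) (hf1 : 1 ≤ f)
    (hUq : (U : ZMod (p^e)) = ((1 + p^f : ℕ) : ZMod (p^e)))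
    (a b c d : ZMod (p^e)) (hdet : IsUnit (a*d - b*c)) (z : Mdl (p^e) U hU) :
    ∃ s t : ℤ, z = (⟨a,b⟩ : Mdl (p^e) U hU)^s * (⟨c,d⟩ : Mdl (p^e) U hU)^t := by
  set x : Mdl (p^e) U hU := ⟨a,b⟩ with hx
  set y : Mdl (p^e) U hU := ⟨c,d⟩ with hy
  set ψ : ZMod (p^e) × ZMod (p^e) → Mdl (p^e) U hU :=
    fun st => x ^ (st.1.val) * y ^ (st.2.val) with hψ
  have hinj : Function.Injective ψ := by
    rintro ⟨s, t⟩ ⟨s', t'⟩ hst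
    simp only [hψ] at hst
    have key : x ^ ((s.val : ℤ) - (s'.val : ℤ)) = y ^ ((t'.val : ℤ) - (t.val : ℤ)) := by
      rw [zpow_sub, zpow_sub, zpow_natCast, zpow_natCast, zpow_natCast, zpow_natCast]
      have c1 : x ^ s.val * (x ^ s'.val)⁻¹ = (x ^ s'.val)⁻¹ * x ^ s.val :=
        ((Commute.refl x).pow_pow s.val s'.val).inv_right.eq
      rw [c1, inv_mul_eq_iff_eq_mul, ← mul_assoc, ← hst]
      group
    obtain ⟨hds, hdt⟩ := core_int p e f hp hodd hf1 hUq a b c d hdet _ _ key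
    have hs : s = s' := by
      have h0 : (((s.val : ℤ) - (s'.val : ℤ) : ℤ) : ZMod (p^e)) = 0 :=
        (ZMod.intCast_zmod_eq_zero_iff_dvd _ _).mpr (by exact_mod_cast hds)
      push_cast at h0
      rw [ZMod.natCast_val, ZMod.natCast_val, ZMod.cast_id, ZMod.cast_id] at h0
      exact sub_eq_zero.mp h0
    have ht : t = t' := by
      have h0 : (((t'.val : ℤ) - (t.val : ℤ) : ℤ) : ZMod (p^e)) = 0 :=
        (ZMod.intCast_zmod_eq_zero_iff_dvd _ _).mpr (by exact_mod_cast hdt)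
      push_cast at h0
      rw [ZMod.natCast_val, ZMod.natCast_val, ZMod.cast_id, ZMod.cast_id] at h0
      exact (sub_eq_zero.mp h0).symm
    rw [hs, ht]
  have hbij : Function.Bijective ψ := by
    rw [Fintype.bijective_iff_injective_and_card]
    exact ⟨hinj, by rw [Mdl.card]; simp [ZMod.card]⟩
  obtain ⟨⟨s, t⟩, hst⟩ := hbij.2 z
  exact ⟨s.val, t.val, by rw [← hst, hψ, zpow_natCast, zpow_natCast]⟩

end Main3

section Main4

variable (p e f : ℕ) [NeZero (p^e)]
variable {U : (ZMod (p^e))ˣ} {hU : U ^ (p^e) = 1}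

/-- if two elements generate the model, the "determinant" of their coordinates is a unit -/
lemma det_unit (hp : p.Prime) (he : 1 ≤ e) (hf1 : 1 ≤ f)
    (hUq : (U : ZMod (p^e)) = ((1 + p^f : ℕ) : ZMod (p^e)))
    (a b c d : ZMod (p^e))
    (hgen : Subgroup.closure {(⟨a,b⟩ : Mdl (p^e) U hU), (⟨c,d⟩ : Mdl (p^e) U hU)} = ⊤) :
    IsUnit (a*d - b*c) := by
  haveI : NeZero p := ⟨hp.pos.ne'⟩
  have hpd : p ∣ p^e := dvd_pow_self p (by omega)
  set π1 : ZMod (p^e) →+* ZMod p := ZMod.castHom hpd _ with hπ1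
  -- the map to the Frattini-type quotient
  have hQc1 : ∀ j : ZMod (p^e), π1 (Qc U j) = 1 := by
    intro j
    unfold Qc
    rw [Units.val_pow_eq_pow_val, hUq, map_pow, map_natCast]
    have hq1 : ((1 + p^f : ℕ) : ZMod p) = 1 := by
      push_cast
      rw [ZMod.natCast_self]
      rw [zero_pow (by omega : f ≠ 0)]
      ring
    rw [hq1, one_pow]
  set θ : Mdl (p^e) U hU →* Multiplicative (ZMod p × ZMod p) :=
    { toFun := fun x => Multiplicative.ofAdd (π1 x.i, π1 x.b),
      map_one' := by
        simp only [Mdl.one_def, map_zero]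
        rfl,
      map_mul' := by
        intro x y
        simp only [Mdl.mul_def, map_add, map_mul, hQc1, mul_one]
        rw [← ofAdd_add]
        rfl } with hθ
  have hθsurj : Function.Surjective θ := by
    intro z
    set w := Multiplicative.toAdd z with hw
    obtain ⟨m₁, hm₁⟩ := (ZMod.natCast_rightInverse (n := p)).surjective w.1
    obtain ⟨m₂, hm₂⟩ := (ZMod.natCast_rightInverse (n := p)).surjective w.2
    refine ⟨⟨(m₁ : ZMod (p^e)), (m₂ : ZMod (p^e))⟩, ?_⟩
    show Multiplicative.ofAdd (π1 (m₁ : ZMod (p^e)), π1 (m₂ : ZMod (p^e))) = z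
    rw [map_natCast, map_natCast, hm₁, hm₂]
    rw [hw]
    simp
  have hclos : Subgroup.closure {θ ⟨a,b⟩, θ ⟨c,d⟩} = ⊤ := by
    rw [← Set.image_pair, ← MonoidHom.map_closure, hgen, Subgroup.map_top_of_surjective _ hθsurj]
  have h10 : Multiplicative.ofAdd ((1 : ZMod p), (0 : ZMod p)) ∈
      Subgroup.closure {θ ⟨a,b⟩, θ ⟨c,d⟩} := by rw [hclos]; trivial
  have h01 : Multiplicative.ofAdd ((0 : ZMod p), (1 : ZMod p)) ∈
      Subgroup.closure {θ ⟨a,b⟩, θ ⟨c,d⟩} := by rw [hclos]; trivial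
  rw [Subgroup.mem_closure_pair] at h10 h01
  obtain ⟨s, t, hst⟩ := h10
  obtain ⟨s', t', hst'⟩ := h01
  have hθab : θ ⟨a,b⟩ = Multiplicative.ofAdd (π1 a, π1 b) := rfl
  have hθcd : θ ⟨c,d⟩ = Multiplicative.ofAdd (π1 c, π1 d) := rfl
  rw [hθab, hθcd] at hst hst'
  rw [← ofAdd_zsmul, ← ofAdd_zsmul, ← ofAdd_add] at hst hst'
  have hst2 := Multiplicative.ofAdd.injective hst
  have hst2' := Multiplicative.ofAdd.injective hst'
  rw [Prod.smul_mk, Prod.smul_mk, Prod.mk_add_mk, Prod.mk.injEq] at hst2 hst2'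
  obtain ⟨e1, e2⟩ := hst2
  obtain ⟨e3, e4⟩ := hst2'
  rw [zsmul_eq_mul, zsmul_eq_mul] at e1 e2 e3 e4
  -- determinant is a unit mod p
  have hdet' : ((s:ZMod p) * t' - (s':ZMod p) * t) * (π1 a * π1 d - π1 b * π1 c) = 1 := by
    have expand : ((s:ZMod p) * t' - (s':ZMod p) * t) * (π1 a * π1 d - π1 b * π1 c)
        = ((s:ZMod p) * π1 a + (t:ZMod p) * π1 c) * ((s':ZMod p) * π1 b + (t':ZMod p) * π1 d)
          - ((s':ZMod p) * π1 a + (t':ZMod p) * π1 c) * ((s:ZMod p) * π1 b + (t:ZMod p) * π1 d) := by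
      ring
    rw [expand, e1, e2, e3, e4]
    ring
  have hu1 : IsUnit (π1 (a*d - b*c)) := by
    rw [map_sub, map_mul, map_mul]
    exact IsUnit.of_mul_eq_one _ (by rw [mul_comm]; exact hdet')
  -- lift to ZMod (p^e)
  set D := (a*d - b*c) with hD
  have hDval : ((D.val : ℕ) : ZMod (p^e)) = D := ZMod.natCast_rightInverse D
  have hπD : π1 D = ((D.val : ℕ) : ZMod p) := by rw [← hDval, map_natCast, hDval]
  rw [hπD] at hu1
  have hcop : (D.val).Coprime p := (ZMod.isUnit_iff_coprime _ _).mp hu1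
  have hcope : (D.val).Coprime (p^e) := hcop.pow_right e
  rw [← hDval]
  exact (ZMod.isUnit_iff_coprime _ _).mpr hcope

end Main4

section GfSide

variable (n q : ℕ)

lemma gf_mk_of0 : gGen n q = PresentedGroup.mk (fermatRels n q) (FreeGroup.of 0) := rfl
lemma gf_mk_of1 : hGen n q = PresentedGroup.mk (fermatRels n q) (FreeGroup.of 1) := rfl

lemma gf_rel_of_mem {r : FreeGroup (Fin 2)} (hr : r ∈ fermatRels n q) :
    PresentedGroup.mk (fermatRels n q) r = 1 :=
  (QuotientGroup.eq_one_iff r).mpr (Subgroup.subset_normalClosure hr)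

lemma gf_rel_g : (gGen n q) ^ n = 1 := by
  rw [gf_mk_of0, ← map_pow]
  exact gf_rel_of_mem n q (by left; rfl)

lemma gf_rel_h : (hGen n q) ^ n = 1 := by
  rw [gf_mk_of1, ← map_pow]
  exact gf_rel_of_mem n q (by right; left; rfl)

lemma gf_rel_conj : (gGen n q)⁻¹ * hGen n q * gGen n q = (hGen n q) ^ q := by
  have h1 : PresentedGroup.mk (fermatRels n q)
      ((FreeGroup.of 0)⁻¹ * FreeGroup.of 1 * FreeGroup.of 0 * (FreeGroup.of 1 ^ q)⁻¹) = 1 :=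
    gf_rel_of_mem n q (by right; right; rfl)
  rw [map_mul, map_mul, map_mul, map_inv, map_inv, map_pow] at h1
  rw [gf_mk_of0, gf_mk_of1]
  exact mul_inv_eq_one.mp h1

lemma gf_hg : hGen n q * gGen n q = gGen n q * (hGen n q) ^ q := by
  have := gf_rel_conj n q
  calc hGen n q * gGen n q = gGen n q * ((gGen n q)⁻¹ * hGen n q * gGen n q) := by group
    _ = gGen n q * (hGen n q) ^ q := by rw [this]

lemma gf_hpow_g (j : ℕ) : (hGen n q) ^ j * gGen n q = gGen n q * (hGen n q) ^ (j * q) := by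
  induction j with
  | zero => simp
  | succ j ih =>
    calc (hGen n q) ^ (j+1) * gGen n q = (hGen n q) ^ j * (hGen n q * gGen n q) := by
          rw [pow_succ]; group
      _ = (hGen n q) ^ j * (gGen n q * (hGen n q) ^ q) := by rw [gf_hg]
      _ = ((hGen n q) ^ j * gGen n q) * (hGen n q) ^ q := by group
      _ = gGen n q * (hGen n q) ^ (j * q) * (hGen n q) ^ q := by rw [ih]
      _ = gGen n q * (hGen n q) ^ ((j+1) * q) := by rw [mul_assoc, ← pow_add]; ring_nf

lemma gf_hpow_gpow (i j : ℕ) :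
    (hGen n q) ^ j * (gGen n q) ^ i = (gGen n q) ^ i * (hGen n q) ^ (j * q ^ i) := by
  induction i generalizing j with
  | zero => simp
  | succ i ih =>
    calc (hGen n q) ^ j * (gGen n q) ^ (i+1)
        = ((hGen n q) ^ j * (gGen n q) ^ i) * gGen n q := by rw [pow_succ]; group
      _ = (gGen n q) ^ i * ((hGen n q) ^ (j * q ^ i) * gGen n q) := by rw [ih]; group
      _ = (gGen n q) ^ i * (gGen n q * (hGen n q) ^ (j * q ^ i * q)) := by rw [gf_hpow_g]
      _ = (gGen n q) ^ (i+1) * (hGen n q) ^ (j * q ^ (i+1)) := by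
          rw [pow_succ]
          rw [show j * q ^ i * q = j * q ^ (i+1) by rw [pow_succ]; ring]
          group

/-- every element of `Gf` is `g^i * h^j` -/
lemma gf_decomp (hn : 0 < n) (z : Gf n q) :
    ∃ i j : ℕ, i < n ∧ j < n ∧ z = (gGen n q) ^ i * (hGen n q) ^ j := by
  have gpow : ∀ m : ℕ, (gGen n q) ^ (n * m) = 1 := fun m => by
    rw [pow_mul, gf_rel_g, one_pow]
  have hpow : ∀ m : ℕ, (hGen n q) ^ (n * m) = 1 := fun m => by
    rw [pow_mul, gf_rel_h, one_pow]
  set S : Subgroup (Gf n q) :=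
    { carrier := {z | ∃ i j : ℕ, z = (gGen n q) ^ i * (hGen n q) ^ j}
      one_mem' := ⟨0, 0, by simp⟩
      mul_mem' := by
        rintro w w' ⟨i, j, rfl⟩ ⟨i', j', rfl⟩
        refine ⟨i + i', j * q ^ i' + j', ?_⟩
        calc (gGen n q ^ i * hGen n q ^ j) * (gGen n q ^ i' * hGen n q ^ j')
            = gGen n q ^ i * (hGen n q ^ j * gGen n q ^ i') * hGen n q ^ j' := by group
          _ = gGen n q ^ i * (gGen n q ^ i' * hGen n q ^ (j * q ^ i')) * hGen n q ^ j' := by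
              rw [gf_hpow_gpow]
          _ = gGen n q ^ (i + i') * hGen n q ^ (j * q ^ i' + j') := by
              rw [pow_add, pow_add]; group
      inv_mem' := by
        rintro w ⟨i, j, rfl⟩
        have key : (gGen n q ^ i * hGen n q ^ j) *
            (gGen n q ^ (i * (n-1)) * hGen n q ^ (j * q ^ (i * (n-1)) * (n-1))) = 1 := by
          calc (gGen n q ^ i * hGen n q ^ j) *
              (gGen n q ^ (i * (n-1)) * hGen n q ^ (j * q ^ (i * (n-1)) * (n-1)))
              = gGen n q ^ i * (hGen n q ^ j * gGen n q ^ (i * (n-1))) *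
                hGen n q ^ (j * q ^ (i * (n-1)) * (n-1)) := by group
            _ = gGen n q ^ i * (gGen n q ^ (i * (n-1)) * hGen n q ^ (j * q ^ (i * (n-1)))) *
                hGen n q ^ (j * q ^ (i * (n-1)) * (n-1)) := by rw [gf_hpow_gpow]
            _ = (gGen n q ^ (i + i * (n-1))) *
                (hGen n q ^ (j * q ^ (i * (n-1)) + j * q ^ (i * (n-1)) * (n-1))) := by
                rw [pow_add, pow_add]; group
            _ = 1 := by
                obtain ⟨m, hm⟩ : ∃ m, n = m + 1 := ⟨n-1, by omega⟩
                have e1 : i + i * (n-1) = n * i := by rw [hm, Nat.add_sub_cancel]; ring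
                have e2 : j * q ^ (i * (n-1)) + j * q ^ (i * (n-1)) * (n-1)
                    = n * (j * q ^ (i * (n-1))) := by rw [hm, Nat.add_sub_cancel]; ring
                rw [e1, e2, gpow, hpow, one_mul]
        exact ⟨i * (n-1), j * q ^ (i * (n-1)) * (n-1),
          inv_eq_of_mul_eq_one_right key⟩ }
    with hS
  have hall : z ∈ S := by
    apply PresentedGroup.generated_by
    intro x
    fin_cases x
    · exact ⟨1, 0, by simp [gGen]⟩
    · exact ⟨0, 1, by simp [hGen]⟩
  obtain ⟨i, j, rfl⟩ := hall
  refine ⟨i % n, j % n, Nat.mod_lt _ hn, Nat.mod_lt _ hn, ?_⟩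
  have hgmod : (gGen n q) ^ i = (gGen n q) ^ (i % n) := by
    conv_lhs => rw [← Nat.mod_add_div i n, pow_add, pow_mul, gf_rel_g, one_pow, mul_one]
  have hhmod : (hGen n q) ^ j = (hGen n q) ^ (j % n) := by
    conv_lhs => rw [← Nat.mod_add_div j n, pow_add, pow_mul, gf_rel_h, one_pow, mul_one]
  rw [hgmod, hhmod]

lemma gf_finite (hn : 0 < n) : Finite (Gf n q) := by
  apply Finite.of_surjective
    (fun ij : Fin n × Fin n => (gGen n q) ^ (ij.1 : ℕ) * (hGen n q) ^ (ij.2 : ℕ))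
  intro z
  obtain ⟨i, j, hi, hj, rfl⟩ := gf_decomp n q hn z
  exact ⟨(⟨i, hi⟩, ⟨j, hj⟩), rfl⟩

lemma gf_card_le (hn : 0 < n) : Nat.card (Gf n q) ≤ n * n := by
  have hsurj : Function.Surjective
      (fun ij : Fin n × Fin n => (gGen n q) ^ (ij.1 : ℕ) * (hGen n q) ^ (ij.2 : ℕ)) := by
    intro z
    obtain ⟨i, j, hi, hj, rfl⟩ := gf_decomp n q hn z
    exact ⟨(⟨i, hi⟩, ⟨j, hj⟩), rfl⟩
  have := Nat.card_le_card_of_surjective _ hsurj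
  simpa using this

end GfSide


theorem stmt15 (p e f : ℕ) (hp : p.Prime) (hodd : Odd p) (he : 1 ≤ e)
    (hf1 : 1 ≤ f) (hfe : f ≤ e) (n : ℕ) (hn : n = p ^ e) (q : ℕ) (hq : q = 1 + p ^ f)
    (x y : Gf n q) (hgen : Subgroup.closure {x, y} = ⊤) :
    (∀ z : Gf n q, ∃ a b : ℤ, z = x ^ a * y ^ b) ∧
    Subgroup.zpowers x ⊓ Subgroup.zpowers y = ⊥ := by
  subst hn hq
  haveI : NeZero (p^e) := ⟨pow_ne_zero e hp.pos.ne'⟩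
  haveI : Fact (1 < p^e) := ⟨Nat.one_lt_pow (by omega) hp.one_lt⟩
  -- the unit q in ZMod (p^e)
  have hppf : ¬ p ∣ 1 + p^f := by
    intro h
    have h2 : p ∣ p^f := dvd_pow_self p (by omega)
    have h3 : p ∣ 1 := by
      have := Nat.dvd_sub h h2
      simpa using this
    have h4 := Nat.dvd_one.mp h3
    have h5 := hp.one_lt
    omega
  have hcop : (1 + p^f).Coprime (p^e) :=
    (Nat.coprime_comm.mp ((Nat.Prime.coprime_iff_not_dvd hp).mpr hppf)).pow_right e
  set U : (ZMod (p^e))ˣ := ZMod.unitOfCoprime _ hcop with hUdef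
  have hUq : (U : ZMod (p^e)) = ((1 + p^f : ℕ) : ZMod (p^e)) := ZMod.coe_unitOfCoprime _ hcop
  have hU : U ^ (p^e) = 1 := by
    ext
    rw [Units.val_pow_eq_pow_val, hUq, Units.val_one]
    have hd : ((p^e : ℕ) : ℤ) ∣ ((1:ℤ)+(p:ℤ)^f)^(p^e) - 1 := by
      have := cor_dvd p f hp hodd hf1 e (p^e) dvd_rfl
      refine dvd_trans ?_ this
      push_cast
      exact pow_dvd_pow _ (by omega)
    have hz : ((((1:ℤ)+(p:ℤ)^f)^(p^e) - 1 : ℤ) : ZMod (p^e)) = 0 :=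
      (ZMod.intCast_zmod_eq_zero_iff_dvd _ _).mpr hd
    push_cast at hz
    push_cast
    linear_combination hz
  -- relations hold in the model
  set Γ : Mdl (p^e) U hU := ⟨1, 0⟩ with hΓ
  set H : Mdl (p^e) U hU := ⟨0, 1⟩ with hH
  set F : Fin 2 → Mdl (p^e) U hU := ![Γ, H] with hF
  have hHq : H ^ (1 + p^f) = ⟨0, ((1 + p^f : ℕ) : ZMod (p^e))⟩ := by
    rw [hH, Mdl.pow_mk]
    congr 1
    · rw [mul_zero]
    · rw [Qc_zero]
      simp
  have hconj : Γ⁻¹ * H * Γ = ⟨0, Qc U 1⟩ := by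
    show (⟨-(1:ZMod (p^e)), -(0:ZMod (p^e)) * Qc U (-1)⟩ : Mdl (p^e) U hU) * H * Γ = _
    rw [Mdl.mul_def, Mdl.mul_def]
    congr 1
    · simp [hH, hΓ]
    · simp [Qc_zero, hH, hΓ]
  have hQc1 : Qc U (1 : ZMod (p^e)) = ((1 + p^f : ℕ) : ZMod (p^e)) := by
    unfold Qc
    rw [ZMod.val_one, pow_one, hUq]
  have hrels : ∀ r ∈ fermatRels (p^e) (1 + p^f), (FreeGroup.lift F) r = 1 := by
    intro r hr
    rcases hr with h | h | h
    · rw [h, map_pow, FreeGroup.lift_apply_of]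
      show Γ ^ (p^e) = 1
      exact Mdl_pow_card p e f hp hodd hf1 hUq Γ
    · rw [h, map_pow, FreeGroup.lift_apply_of]
      show H ^ (p^e) = 1
      exact Mdl_pow_card p e f hp hodd hf1 hUq H
    · rw [Set.mem_singleton_iff] at h
      rw [h, map_mul, map_mul, map_mul, map_inv, map_inv, map_pow,
        FreeGroup.lift_apply_of, FreeGroup.lift_apply_of]
      show Γ⁻¹ * H * Γ * (H ^ (1 + p^f))⁻¹ = 1
      rw [hconj, hHq, hQc1, mul_inv_cancel]
  set π : Gf (p^e) (1 + p^f) →* Mdl (p^e) U hU := PresentedGroup.toGroup hrels with hπ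
  have hπg : π (gGen (p^e) (1+p^f)) = Γ := PresentedGroup.toGroup.of hrels
  have hπh : π (hGen (p^e) (1+p^f)) = H := PresentedGroup.toGroup.of hrels
  -- π is surjective
  have hdetΓH : IsUnit ((1 : ZMod (p^e)) * 1 - 0 * 0) := by
    rw [mul_one, mul_zero, sub_zero]; exact isUnit_one
  have hπsurj : Function.Surjective π := by
    intro z
    obtain ⟨s, t, hst⟩ := prod_decomp p e f hp hodd hf1 hUq 1 0 0 1 hdetΓH z
    refine ⟨(gGen (p^e) (1+p^f)) ^ s * (hGen (p^e) (1+p^f)) ^ t, ?_⟩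
    rw [map_mul, map_zpow, map_zpow, hπg, hπh, hΓ, hH]
    exact hst.symm
  -- π is bijective
  haveI : Finite (Gf (p^e) (1+p^f)) := gf_finite _ _ (pow_pos hp.pos e)
  have hπbij : Function.Bijective π := by
    rw [Nat.bijective_iff_surjective_and_card]
    refine ⟨hπsurj, le_antisymm ?_ (Nat.card_le_card_of_surjective _ hπsurj)⟩
    calc Nat.card (Gf (p^e) (1+p^f)) ≤ (p^e) * (p^e) := gf_card_le _ _ (pow_pos hp.pos e)
      _ = Nat.card (Mdl (p^e) U hU) := by
          rw [Nat.card_eq_fintype_card, Mdl.card]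
  have hπinj : Function.Injective π := hπbij.1
  -- coordinates of the images of x and y
  rcases hxa : π x with ⟨a, b⟩
  rcases hyc : π y with ⟨c, d⟩
  -- transported generation and determinant
  have hclos : Subgroup.closure {π x, π y} = ⊤ := by
    rw [← Set.image_pair, ← MonoidHom.map_closure, hgen, Subgroup.map_top_of_surjective _ hπsurj]
  rw [hxa, hyc] at hclos
  have hdet : IsUnit (a*d - b*c) := det_unit p e f hp he hf1 hUq a b c d hclos
  constructor
  · -- decomposition
    intro z
    obtain ⟨s, t, hst⟩ := prod_decomp p e f hp hodd hf1 hUq a b c d hdet (π z)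
    refine ⟨s, t, hπinj ?_⟩
    rw [map_mul, map_zpow, map_zpow, hxa, hyc, hst]
  · -- trivial intersection
    rw [eq_bot_iff]
    rintro w hw
    rw [Subgroup.mem_inf] at hw
    obtain ⟨⟨α, hα0⟩, ⟨β, hβ0⟩⟩ := hw
    have hα : x ^ α = w := hα0
    have hβ : y ^ β = w := hβ0
    have hkey : (⟨a,b⟩ : Mdl (p^e) U hU) ^ α = (⟨c,d⟩ : Mdl (p^e) U hU) ^ β := by
      rw [← hxa, ← hyc, ← map_zpow, ← map_zpow, hα, hβ]
    obtain ⟨hdα, _⟩ := core_int p e f hp hodd hf1 hUq a b c d hdet α β hkey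
    obtain ⟨m, hm⟩ := hdα
    have hxn : x ^ ((p^e : ℕ) : ℤ) = 1 := by
      apply hπinj
      rw [map_zpow, map_one, hxa, zpow_natCast]
      exact Mdl_pow_card p e f hp hodd hf1 hUq _
    rw [Subgroup.mem_bot, ← hα, hm, zpow_mul, hxn, one_zpow]
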